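/- Let G be an edge-colored graph on n vertices with t ≥ s ≥ 2 and n ≥ t. If Σ_{v ∈ V(G)} d^c(v) > n²/2 + σ_{s,t}·n^{2−1/s} + s·n, where σ_{s,t} = s((t−1)/(s−1)!)^{1/s}, then G contains a properly colored K_{s,t}. -/

import Mathlib

lemma aux_rainbow {α β : Type*} (T : Finset α) (f : α → β) :
    ∃ S : Finset α, S ⊆ T ∧ S.card = (f '' ↑T).ncard ∧ Set.InjOn f ↑S := by
  obtain ⟨s', hsub, hbij⟩ := Set.exists_subset_bijOn (↑T : Set α) f
  have hfin : s'.Finite := T.finite_toSet.subset hsub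
  refine ⟨hfin.toFinset, by simpa using hsub, ?_, by simpa using hbij.injOn⟩
  rw [← Set.ncard_eq_toFinset_card _ hfin, ← hbij.image_eq,
    Set.ncard_image_of_injOn hbij.injOn]


lemma aux_convex (a : ℝ) (s : ℕ) :
    ConvexOn ℝ Set.univ (fun x : ℝ => max (x - a) 0 ^ s) := by
  have h1 : ConvexOn ℝ Set.univ (fun x : ℝ => x - a) :=
    (convexOn_id convex_univ).sub (concaveOn_const a convex_univ)
  exact (h1.sup (convexOn_const (0:ℝ) convex_univ)).pow
    (fun x _ => le_max_right _ _) s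

lemma aux_desc (d s : ℕ) : (d - (s-1))^s ≤ d.descFactorial s := by
  calc (d - (s-1))^s = ∏ _i ∈ Finset.range s, (d - (s-1)) := by
        rw [Finset.prod_const, Finset.card_range]
  _ ≤ ∏ i ∈ Finset.range s, (d - i) :=
      Finset.prod_le_prod' fun i hi =>
        Nat.sub_le_sub_left (by have := Finset.mem_range.mp hi; omega) d
  _ = d.descFactorial s := (Nat.descFactorial_eq_prod_range d s).symm

/-- Jensen-type bound: `n * max(avg - (s-1), 0)^s ≤ s! * Σ C(d v, s)`. -/
lemma aux_jensen (n s : ℕ) (hn0 : (0:ℝ) < n) (hs1 : 1 ≤ s) (d : Fin n → ℕ) :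
    (n:ℝ) * (max (((∑ v : Fin n, d v : ℕ):ℝ)/n - ((s-1:ℕ):ℝ)) 0)^s
      ≤ (Nat.factorial s : ℝ) * ∑ v : Fin n, ((d v).choose s) := by
  set f : ℝ → ℝ := fun x => max (x - ((s-1:ℕ):ℝ)) 0 ^ s with hfdef
  have hfapp : ∀ x : ℝ, f x = max (x - ((s-1:ℕ):ℝ)) 0 ^ s := fun _ => rfl
  have hconv : ConvexOn ℝ Set.univ f := aux_convex ((s-1:ℕ):ℝ) s
  have hfle : ∀ v : Fin n, f ((d v)) ≤ (((d v).descFactorial s : ℕ) : ℝ) := by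
    intro v
    rw [hfapp]
    rcases le_or_gt (s-1:ℕ) (d v) with hge | hlt
    · have hmax : max (((d v):ℝ) - ((s-1:ℕ):ℝ)) 0 = (((d v - (s-1) : ℕ)):ℝ) := by
        rw [← Nat.cast_sub hge]
        exact max_eq_left (Nat.cast_nonneg _)
      rw [hmax, ← Nat.cast_pow, Nat.cast_le]
      exact aux_desc (d v) s
    · have hmax : max (((d v):ℝ) - ((s-1:ℕ):ℝ)) 0 = 0 := by
        apply max_eq_right
        rw [sub_nonpos, Nat.cast_le]
        exact hlt.le
      rw [hmax, zero_pow (by omega)]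
      exact Nat.cast_nonneg _
  have hJ : (n:ℝ) * f (((∑ v : Fin n, d v : ℕ):ℝ)/n) ≤ ∑ v : Fin n, f ((d v)) := by
    have hnne : (n:ℝ) ≠ 0 := hn0.ne'
    have hw : ∑ _v : Fin n, (1/(n:ℝ)) = 1 := by
      rw [Finset.sum_const, Finset.card_univ, Fintype.card_fin, nsmul_eq_mul]
      field_simp
    have h := hconv.map_sum_le (t := (Finset.univ : Finset (Fin n)))
      (w := fun _ : Fin n => 1/(n:ℝ)) (p := fun v : Fin n => ((d v) : ℝ))
      (fun _ _ => by positivity) hw (fun _ _ => Set.mem_univ _)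
    simp only [smul_eq_mul] at h
    rw [← Finset.mul_sum, ← Finset.mul_sum] at h
    have hD' : (1/(n:ℝ)) * ∑ v : Fin n, ((d v) : ℝ) = ((∑ v : Fin n, d v : ℕ):ℝ)/n := by
      push_cast
      ring
    rw [hD'] at h
    calc (n:ℝ) * f (((∑ v : Fin n, d v : ℕ):ℝ)/n)
        ≤ (n:ℝ) * ((1/(n:ℝ)) * ∑ v : Fin n, f ((d v))) :=
          mul_le_mul_of_nonneg_left h hn0.le
    _ = ∑ v : Fin n, f ((d v)) := by field_simp
  have hdescW : ∑ v : Fin n, (((d v).descFactorial s : ℕ) : ℝ)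
      = (s.factorial : ℝ) * ∑ v : Fin n, ((d v).choose s) := by
    push_cast [Nat.descFactorial_eq_factorial_mul_choose]
    rw [Finset.mul_sum]
  calc (n:ℝ) * (max (((∑ v : Fin n, d v : ℕ):ℝ)/n - ((s-1:ℕ):ℝ)) 0)^s
      = (n:ℝ) * f (((∑ v : Fin n, d v : ℕ):ℝ)/n) := by rw [hfapp]
  _ ≤ ∑ v : Fin n, f ((d v)) := hJ
  _ ≤ ∑ v : Fin n, (((d v).descFactorial s : ℕ) : ℝ) :=
      Finset.sum_le_sum fun v _ => hfle v
  _ = (s.factorial : ℝ) * ∑ v : Fin n, ((d v).choose s) := hdescW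

/-- Final numeric comparison. -/
lemma aux_Wlb (n s t W : ℕ) (hs : 2 ≤ s) (hst : s ≤ t) (htn : t ≤ n)
    (key : (n:ℝ) * ((2*(s:ℝ)*((((t:ℝ) - 1) / (Nat.factorial (s-1))) ^ ((1:ℝ)/s)))
        * ((n:ℝ)^(1 - 1/(s:ℝ))))^s ≤ (Nat.factorial s : ℝ) * W) :
    (t-1) * (n.choose s) < W := by
  have hn2 : 2 ≤ n := le_trans (hs.trans hst) htn
  have hn0 : (0:ℝ) < n := by exact_mod_cast Nat.lt_of_lt_of_le Nat.zero_lt_two hn2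
  have hs1 : 1 ≤ s := le_trans one_le_two hs
  have hsR : (0:ℝ) < s := by exact_mod_cast Nat.lt_of_lt_of_le Nat.zero_lt_two hs
  have hsne : (s:ℝ) ≠ 0 := hsR.ne'
  have ht2 : 2 ≤ t := hs.trans hst
  have ht1 : (1:ℝ) ≤ (t:ℝ) - 1 := by
    have h : (2:ℝ) ≤ t := by exact_mod_cast ht2
    linarith
  have hfac0 : (0:ℝ) < ((s-1).factorial : ℝ) := by exact_mod_cast Nat.factorial_pos _
  have hbase0 : (0:ℝ) < ((t:ℝ)-1)/(Nat.factorial (s-1)) := div_pos (by linarith) hfac0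
  set X : ℝ := (((t:ℝ) - 1) / (Nat.factorial (s-1))) ^ ((1:ℝ)/s) with hXdef
  have hXs : X ^ s = ((t:ℝ)-1)/(Nat.factorial (s-1)) := by
    rw [hXdef, ← Real.rpow_natCast ((((t:ℝ) - 1) / (Nat.factorial (s-1))) ^ ((1:ℝ)/s)) s,
      ← Real.rpow_mul hbase0.le, one_div, inv_mul_cancel₀ hsne, Real.rpow_one]
  have hnp : ((n:ℝ)^(1-1/(s:ℝ)))^s = (n:ℝ)^(s-1:ℕ) := by
    rw [← Real.rpow_natCast ((n:ℝ)^(1-1/(s:ℝ))) s, ← Real.rpow_mul hn0.le,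
      ← Real.rpow_natCast (n:ℝ) (s-1)]
    congr 1
    rw [Nat.cast_sub hs1]
    field_simp
    norm_num
  have hfact : ((s-1).factorial : ℝ) < (2*(s:ℝ))^s := by
    have h1 : (s-1).factorial < (2*s)^s := by
      calc (s-1).factorial ≤ (s-1)^(s-1) := Nat.factorial_le_pow _
      _ ≤ (2*s)^(s-1) := Nat.pow_le_pow_left (by omega) _
      _ < (2*s)^s := Nat.pow_lt_pow_right (by omega) (by omega)
    exact_mod_cast h1
  have e1 : ((2*(s:ℝ)*X) * ((n:ℝ)^(1 - 1/(s:ℝ))))^s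
      = (2*(s:ℝ))^s * (((t:ℝ)-1)/((s-1).factorial : ℝ)) * (n:ℝ)^(s-1:ℕ) := by
    rw [mul_pow, mul_pow, hXs, hnp]
  have e2 : (s.factorial:ℝ) * (n.choose s : ℝ) = (n.descFactorial s : ℝ) := by
    exact_mod_cast
      congrArg (Nat.cast : ℕ → ℝ) (Nat.descFactorial_eq_factorial_mul_choose n s).symm
  have e3 : (n.descFactorial s : ℝ) ≤ (n:ℝ)^s := by
    exact_mod_cast Nat.descFactorial_le_pow n s
  have e4 : (n:ℝ)^s = (n:ℝ) * (n:ℝ)^(s-1:ℕ) := by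
    rw [← pow_succ']
    congr 1
    omega
  have hneed : ((t:ℝ)-1) * ((s.factorial : ℝ) * (n.choose s : ℝ))
      < (n:ℝ) * ((2*(s:ℝ)*X) * ((n:ℝ)^(1 - 1/(s:ℝ))))^s := by
    rw [e1, e2]
    have h5 : ((t:ℝ)-1) * (n.descFactorial s : ℝ) ≤ ((t:ℝ)-1) * (n:ℝ)^s :=
      mul_le_mul_of_nonneg_left e3 (by linarith)
    have h2s : (1:ℝ) < (2*(s:ℝ))^s / ((s-1).factorial : ℝ) :=
      (one_lt_div hfac0).mpr hfact
    have hrhs : (n:ℝ) * ((2*(s:ℝ))^s * (((t:ℝ)-1)/((s-1).factorial : ℝ)) * (n:ℝ)^(s-1:ℕ))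
        = ((t:ℝ)-1) * (n:ℝ)^s * ((2*(s:ℝ))^s / ((s-1).factorial : ℝ)) := by
      rw [e4]
      ring
    have htn0 : (0:ℝ) < ((t:ℝ)-1) * (n:ℝ)^s := by
      have h : (0:ℝ) < (n:ℝ)^s := by positivity
      nlinarith
    have h6 : ((t:ℝ)-1) * (n:ℝ)^s
        < (n:ℝ) * ((2*(s:ℝ))^s * (((t:ℝ)-1)/((s-1).factorial : ℝ)) * (n:ℝ)^(s-1:ℕ)) := by
      rw [hrhs]
      nlinarith [mul_lt_mul_of_pos_left h2s htn0]
    linarith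
  have hfacS : (0:ℝ) < (s.factorial : ℝ) := by exact_mod_cast Nat.factorial_pos s
  have hlt : ((t:ℝ)-1) * (n.choose s : ℝ) < (W:ℝ) := by
    have h := lt_of_lt_of_le hneed key
    have h' : (s.factorial:ℝ) * (((t:ℝ)-1) * (n.choose s : ℝ)) < (s.factorial:ℝ) * W := by
      nlinarith
    exact (mul_lt_mul_iff_right₀ hfacS).mp h'
  have ht1' : ((t-1:ℕ):ℝ) = (t:ℝ) - 1 := by
    rw [Nat.cast_sub (by omega)]
    norm_num
  have h : ((t-1:ℕ):ℝ) * ((n.choose s : ℕ):ℝ) < (W:ℝ) := by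
    rw [ht1']
    exact hlt
  exact_mod_cast h

/-- Pigeonhole: if `Σ_v C(d_H(v), s) > (t-1)·C(n,s)` then some `s`-set has `t` common neighbors. -/
lemma aux_pigeon (n s t : ℕ) (T : Fin n → Finset (Fin n))
    (hW : (t-1) * (n.choose s) < ∑ v : Fin n, ((T v).card.choose s)) (ht : 1 ≤ t) :
    ∃ A ∈ Finset.powersetCard s (Finset.univ : Finset (Fin n)),
      t ≤ (Finset.univ.filter (fun v => A ⊆ T v)).card := by
  classical
  have hdc : ∑ A ∈ Finset.powersetCard s (Finset.univ : Finset (Fin n)),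
      (Finset.univ.filter (fun v => A ⊆ T v)).card
      = ∑ v : Fin n, ((T v).card.choose s) := by
    have step : ∀ A : Finset (Fin n), (Finset.univ.filter (fun v => A ⊆ T v)).card
        = ∑ v : Fin n, if A ⊆ T v then 1 else 0 := fun A => Finset.card_filter _ _
    rw [Finset.sum_congr rfl fun A _ => step A, Finset.sum_comm]
    apply Finset.sum_congr rfl
    intro v _
    rw [← Finset.card_filter]
    have h : (Finset.powersetCard s (Finset.univ : Finset (Fin n))).filter (fun A => A ⊆ T v)
        = Finset.powersetCard s (T v) := by
      ext A
      simp only [Finset.mem_filter, Finset.mem_powersetCard]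
      constructor
      · rintro ⟨⟨-, h2⟩, h3⟩; exact ⟨h3, h2⟩
      · rintro ⟨h1, h2⟩; exact ⟨⟨Finset.subset_univ _, h2⟩, h1⟩
    rw [h, Finset.card_powersetCard]
  by_contra hcon
  push_neg at hcon
  have hle : ∑ A ∈ Finset.powersetCard s (Finset.univ : Finset (Fin n)),
      (Finset.univ.filter (fun v => A ⊆ T v)).card ≤ (t-1) * (n.choose s) := by
    calc ∑ A ∈ Finset.powersetCard s (Finset.univ : Finset (Fin n)),
        (Finset.univ.filter (fun v => A ⊆ T v)).card
        ≤ ∑ _A ∈ Finset.powersetCard s (Finset.univ : Finset (Fin n)), (t-1) :=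
          Finset.sum_le_sum fun A hA => by
            have := hcon A hA
            omega
    _ = (t-1) * (n.choose s) := by
        rw [Finset.sum_const, smul_eq_mul, Finset.card_powersetCard, Finset.card_univ,
          Fintype.card_fin, mul_comm]
  rw [hdc] at hle
  omega

/-- Every edge-colored graph `G` on `n` vertices (`2 ≤ s ≤ t ≤ n`) with
`Σ_v d^c(v) > n²/2 + σ_{s,t}·n^{2-1/s} + s·n`, where `σ_{s,t} = s((t-1)/(s-1)!)^{1/s}`,
contains a properly colored `K_{s,t}`. -/
theorem stmt_13 (n s t : ℕ) (hs : 2 ≤ s) (hst : s ≤ t) (htn : t ≤ n) {C : Type*}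
    (G : SimpleGraph (Fin n)) (c : Fin n → Fin n → C) (hc : ∀ u v, c u v = c v u)
    (hsum : ((∑ v : Fin n, ((c v) '' {u | G.Adj v u}).ncard : ℕ) : ℝ) >
      (n : ℝ) ^ 2 / 2 +
        (s : ℝ) * (((t : ℝ) - 1) / (Nat.factorial (s - 1))) ^ ((1 : ℝ) / s) *
          (n : ℝ) ^ (2 - 1 / (s : ℝ)) + (s : ℝ) * n) :
    ∃ (A B : Finset (Fin n)), Disjoint A B ∧ A.card = s ∧ B.card = t ∧
      (∀ a ∈ A, ∀ b ∈ B, G.Adj a b) ∧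
      (∀ a ∈ A, ∀ b ∈ B, ∀ b' ∈ B, b ≠ b' → c a b ≠ c a b') ∧
      (∀ b ∈ B, ∀ a ∈ A, ∀ a' ∈ A, a ≠ a' → c a b ≠ c a' b) := by
  classical
  have hn2 : 2 ≤ n := le_trans (hs.trans hst) htn
  have hn0 : (0:ℝ) < n := by exact_mod_cast Nat.lt_of_lt_of_le Nat.zero_lt_two hn2
  have hs1 : 1 ≤ s := le_trans one_le_two hs
  have hsR : (0:ℝ) < s := by exact_mod_cast Nat.lt_of_lt_of_le Nat.zero_lt_two hs
  -- rainbow stars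
  choose S hSsub hScard hSinj using fun v => aux_rainbow (G.neighborFinset v) (c v)
  have hSadj : ∀ {u v : Fin n}, u ∈ S v → G.Adj v u := by
    intro u v h
    exact (SimpleGraph.mem_neighborFinset G v u).mp (hSsub v h)
  set T : Fin n → Finset (Fin n) := fun v => (S v).filter (fun u => v ∈ S u) with hT
  have hTmem : ∀ u v : Fin n, u ∈ T v ↔ u ∈ S v ∧ v ∈ S u := by
    intro u v; simp [hT]
  set M : ℕ := ∑ v : Fin n, (S v).card with hMdef
  set D : ℕ := ∑ v : Fin n, (T v).card with hDdef
  have hM : (∑ v : Fin n, ((c v) '' {u | G.Adj v u}).ncard) = M := by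
    rw [hMdef]
    apply Finset.sum_congr rfl
    intro v _
    rw [hScard v]
    congr 1
    rw [SimpleGraph.neighborFinset_def, Set.coe_toFinset]
    rfl
  rw [hM] at hsum
  -- cardinality as indicator sums
  have hcard : ∀ (A : Finset (Fin n)), A.card = ∑ u : Fin n, if u ∈ A then 1 else 0 := by
    intro A
    rw [← Finset.card_filter, Finset.filter_univ_mem]
  -- Step 2 : 2*M ≤ D + n*n
  have h2M : 2 * M ≤ D + n * n := by
    have e1 : M = ∑ v : Fin n, ∑ u : Fin n, (if u ∈ S v then (1:ℕ) else 0) := by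
      rw [hMdef]; exact Finset.sum_congr rfl fun v _ => hcard (S v)
    have e2 : M = ∑ v : Fin n, ∑ u : Fin n, (if v ∈ S u then (1:ℕ) else 0) := by
      rw [e1]; exact Finset.sum_comm
    have e3 : D = ∑ v : Fin n, ∑ u : Fin n, (if u ∈ T v then (1:ℕ) else 0) := by
      rw [hDdef]; exact Finset.sum_congr rfl fun v _ => hcard (T v)
    have key : ∀ v u : Fin n, (if u ∈ S v then (1:ℕ) else 0) + (if v ∈ S u then 1 else 0)
        ≤ (if u ∈ T v then 1 else 0) + 1 := by
      intro v u
      by_cases h1 : u ∈ S v <;> by_cases h2 : v ∈ S u <;>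
        simp [hTmem, h1, h2]
    have big : (∑ v : Fin n, ∑ u : Fin n, (if u ∈ S v then (1:ℕ) else 0))
        + (∑ v : Fin n, ∑ u : Fin n, (if v ∈ S u then (1:ℕ) else 0))
        ≤ (∑ v : Fin n, ∑ u : Fin n, (if u ∈ T v then (1:ℕ) else 0)) + n * n := by
      have h := Finset.sum_le_sum (s := (Finset.univ : Finset (Fin n)))
        fun v (_ : v ∈ Finset.univ) =>
          Finset.sum_le_sum (s := (Finset.univ : Finset (Fin n)))
            fun u (_ : u ∈ Finset.univ) => key v u
      simpa [Finset.sum_add_distrib, Finset.card_univ] using h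
    rw [← e1, ← e2, ← e3] at big
    omega
  -- analytic constants
  set X : ℝ := (((t:ℝ) - 1) / (Nat.factorial (s-1))) ^ ((1:ℝ)/s) with hXdef
  have ht2 : 2 ≤ t := hs.trans hst
  have ht1 : (1:ℝ) ≤ (t:ℝ) - 1 := by
    have h : (2:ℝ) ≤ t := by exact_mod_cast ht2
    linarith
  have hbase0 : (0:ℝ) < ((t:ℝ)-1)/(Nat.factorial (s-1)) := by
    apply div_pos (by linarith)
    exact_mod_cast Nat.factorial_pos (s-1)
  have hX0 : 0 < X := Real.rpow_pos_of_pos hbase0 _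
  have hsplit : (n:ℝ) ^ (2 - 1/(s:ℝ)) = (n:ℝ) ^ (1 - 1/(s:ℝ)) * n := by
    have h : (2 - 1/(s:ℝ)) = (1 - 1/(s:ℝ)) + 1 := by ring
    rw [h, Real.rpow_add hn0, Real.rpow_one]
  have hnp0 : (0:ℝ) < (n:ℝ) ^ (1 - 1/(s:ℝ)) := Real.rpow_pos_of_pos hn0 _
  have hD : (D:ℝ) > (2 * ((s:ℝ) * X * ((n:ℝ)^(1 - 1/(s:ℝ))))) * n + 2 * s * n := by
    have h2M' : 2*(M:ℝ) ≤ (D:ℝ) + (n:ℝ)^2 := by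
      rw [sq]
      exact_mod_cast h2M
    rw [hsplit] at hsum
    nlinarith [hsum, h2M']
  -- Jensen and counting
  set W : ℕ := ∑ v : Fin n, ((T v).card.choose s) with hWdef
  have hJW := aux_jensen n s hn0 hs1 (fun v => (T v).card)
  rw [← hDdef, ← hWdef] at hJW
  have hcast : ((s-1:ℕ):ℝ) = (s:ℝ) - 1 := by
    rw [Nat.cast_sub hs1]
    norm_num
  have hDn : (D:ℝ)/n > 2*(s:ℝ)*X * (n:ℝ)^(1-1/(s:ℝ)) + 2*s := by
    rw [gt_iff_lt, lt_div_iff₀ hn0]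
    nlinarith [hD]
  have hb : 2*(s:ℝ)*X * (n:ℝ)^(1-1/(s:ℝ)) ≤ max ((D:ℝ)/n - ((s-1:ℕ):ℝ)) 0 := by
    refine le_trans ?_ (le_max_left _ _)
    rw [hcast]
    have hsR' : (0:ℝ) < (s:ℝ) := hsR
    linarith
  have hbase : (0:ℝ) ≤ 2*(s:ℝ)*X * (n:ℝ)^(1-1/(s:ℝ)) := by positivity
  have key : (n:ℝ) * ((2*(s:ℝ)*X) * ((n:ℝ)^(1 - 1/(s:ℝ))))^s ≤ (Nat.factorial s:ℝ) * W := by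
    refine le_trans (mul_le_mul_of_nonneg_left (pow_le_pow_left₀ hbase hb s) hn0.le) hJW
  rw [hXdef] at key
  have hWlb : (t-1) * (n.choose s) < W := aux_Wlb n s t W hs hst htn key
  obtain ⟨A, hA𝒜, hAt⟩ := aux_pigeon n s t T (hWdef ▸ hWlb) (by omega)
  have hAcard : A.card = s := (Finset.mem_powersetCard.mp hA𝒜).2
  obtain ⟨B, hBsub, hBcard⟩ := Finset.exists_subset_card_eq hAt
  have hB : ∀ b ∈ B, A ⊆ T b := fun b hb => (Finset.mem_filter.mp (hBsub hb)).2
  have hTS : ∀ {a b : Fin n}, a ∈ T b → a ∈ S b ∧ b ∈ S a := fun h => (hTmem _ _).mp h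
  refine ⟨A, B, ?_, hAcard, hBcard, ?_, ?_, ?_⟩
  · rw [Finset.disjoint_left]
    intro a haA haB
    have h : a ∈ T a := hB a haB haA
    exact (G.irrefl) (hSadj (hTS h).1)
  · intro a haA b hbB
    exact (hSadj (hTS (hB b hbB haA)).1).symm
  · intro a haA b hbB b' hb'B hne hcc
    exact hne (hSinj a (Finset.mem_coe.mpr (hTS (hB b hbB haA)).2)
      (Finset.mem_coe.mpr (hTS (hB b' hb'B haA)).2) hcc)
  · intro b hbB a haA a' ha'A hne hcc
    apply hne
    apply hSinj b (Finset.mem_coe.mpr (hTS (hB b hbB haA)).1)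
      (Finset.mem_coe.mpr (hTS (hB b hbB ha'A)).1)
    rw [← hc a b, ← hc a' b]
    exact hcc
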